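/- Let C be a connected combinatorial (v,b,r,k)-configuration with n-anonymous neighborhoods whose anonymity partition G = {g_1, …, g_m} (the partition of the points into classes with equal neighborhoods) satisfies |g_i| = n for all i. Then r = n if and only if m = k. -/

import Mathlib

open Finset

variable {P : Type*}

/-- Two points are collinear if they are equal or some line contains both. -/
def Collin [DecidableEq P] (L : Finset (Finset P)) (p q : P) : Prop :=
  p = q ∨ ∃ l ∈ L, p ∈ l ∧ q ∈ l

/-- The (open) neighborhood `N p` of a point `p`: the points collinear with `p`
and different from `p`. -/
def nbhd [Fintype P] [DecidableEq P] (L : Finset (Finset P)) (p : P) : Finset P :=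
  Finset.univ.filter fun q => q ≠ p ∧ ∃ l ∈ L, p ∈ l ∧ q ∈ l

/-- The closed neighborhood `CN p` of a point `p`: its neighborhood together with `p`. -/
def cnbhd [Fintype P] [DecidableEq P] (L : Finset (Finset P)) (p : P) : Finset P :=
  insert p (nbhd L p)

/-- A combinatorial `(v,b,r,k)`-configuration: `v` points, `b` lines, every line
has exactly `k ≥ 2` points, every point is on exactly `r ≥ 1` lines, and any two
distinct points are on at most one common line. -/
def IsConfiguration [Fintype P] [DecidableEq P] (L : Finset (Finset P))
    (v b r k : ℕ) : Prop :=
  Fintype.card P = v ∧ L.card = b ∧ 2 ≤ k ∧ 1 ≤ r ∧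
  (∀ l ∈ L, l.card = k) ∧
  (∀ p : P, (L.filter fun l => p ∈ l).card = r) ∧
  (∀ p q : P, p ≠ q → (L.filter fun l => p ∈ l ∧ q ∈ l).card ≤ 1)

/-- The anonymity class of a point `p`: the set of points with the same
neighborhood as `p`. -/
def anonClass [Fintype P] [DecidableEq P] (L : Finset (Finset P)) (p : P) :
    Finset P :=
  Finset.univ.filter fun q => nbhd L q = nbhd L p

/-- An incidence structure is connected if any two points are joined by a chain
of incidences. -/
def ConfigConnected [DecidableEq P] (L : Finset (Finset P)) : Prop :=
  ∀ p q : P, Relation.ReflTransGen (fun a b : P => ∃ l ∈ L, a ∈ l ∧ b ∈ l) p q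

set_option linter.unusedSectionVars false
section AuxAnon
variable [Fintype P] [DecidableEq P] (L : Finset (Finset P))

lemma mem_nbhd {p q : P} : q ∈ nbhd L p ↔ q ≠ p ∧ ∃ l ∈ L, p ∈ l ∧ q ∈ l := by
  simp [nbhd]

lemma not_mem_nbhd_self (p : P) : p ∉ nbhd L p := by simp [nbhd]

lemma nbhd_symm {p q : P} (h : q ∈ nbhd L p) : p ∈ nbhd L q := by
  rw [mem_nbhd] at h ⊢
  obtain ⟨hne, l, hl, hp, hq⟩ := h
  exact ⟨hne.symm, l, hl, hq, hp⟩

lemma mem_anonClass {p q : P} : q ∈ anonClass L p ↔ nbhd L q = nbhd L p := by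
  simp [anonClass]

lemma self_mem_anonClass (p : P) : p ∈ anonClass L p := by simp [anonClass]

lemma anonClass_eq_of_mem {p q : P} (h : q ∈ anonClass L p) :
    anonClass L q = anonClass L p := by
  rw [mem_anonClass] at h
  ext x; simp [mem_anonClass, h]

lemma class_subset_nbhd {p q : P} (h : q ∈ nbhd L p) :
    anonClass L q ⊆ nbhd L p := by
  intro x hx
  rw [mem_anonClass] at hx
  have hp : p ∈ nbhd L q := nbhd_symm L h
  rw [← hx] at hp
  exact nbhd_symm L hp

lemma eq_of_class_of_line {x y : P} (h : x ∈ anonClass L y) {l : Finset P}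
    (hl : l ∈ L) (hx : x ∈ l) (hy : y ∈ l) : x = y := by
  by_contra hne
  have hxn : x ∈ nbhd L y := (mem_nbhd _).mpr ⟨hne, l, hl, hy, hx⟩
  rw [mem_anonClass] at h
  rw [← h] at hxn
  exact not_mem_nbhd_self L x hxn

-- NEW:
lemma nbhd_card {v b r k : ℕ} (hC : IsConfiguration L v b r k) (p : P) :
    (nbhd L p).card = r * (k - 1) := by
  obtain ⟨-, -, hk, -, hline, hdeg, hpair⟩ := hC
  have heq : nbhd L p = (L.filter fun l => p ∈ l).biUnion (fun l => l.erase p) := by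
    ext x
    simp only [mem_nbhd, mem_biUnion, mem_filter, mem_erase]
    constructor
    · rintro ⟨hne, l, hl, hp, hx⟩; exact ⟨l, ⟨hl, hp⟩, hne, hx⟩
    · rintro ⟨l, ⟨hl, hp⟩, hne, hx⟩; exact ⟨hne, l, hl, hp, hx⟩
  rw [heq, card_biUnion]
  · rw [Finset.sum_congr rfl (fun l hl => ?_), Finset.sum_const, hdeg p, smul_eq_mul]
    rw [mem_filter] at hl
    rw [card_erase_of_mem hl.2, hline l hl.1]
  · intro l1 h1 l2 h2 hne
    rw [mem_coe, mem_filter] at h1 h2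
    rw [Function.onFun, Finset.disjoint_left]
    intro x hx1 hx2
    rw [mem_erase] at hx1 hx2
    have m1 : l1 ∈ L.filter fun l => p ∈ l ∧ x ∈ l := by
      simp [mem_filter, h1.1, h1.2, hx1.2]
    have m2 : l2 ∈ L.filter fun l => p ∈ l ∧ x ∈ l := by
      simp [mem_filter, h2.1, h2.2, hx2.2]
    exact hne (Finset.card_le_one.mp (hpair p x (Ne.symm hx1.1)) _ m1 _ m2)

lemma classes_biUnion_card {n : ℕ} (hclass : ∀ p : P, (anonClass L p).card = n)
    (S : Finset (Finset P)) (hS : ∀ s ∈ S, ∃ q, s = anonClass L q) :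
    (S.biUnion id).card = n * S.card := by
  rw [card_biUnion]
  · rw [Finset.sum_congr rfl (fun s hs => ?_), Finset.sum_const, smul_eq_mul, mul_comm]
    obtain ⟨q, rfl⟩ := hS s hs
    exact hclass q
  · intro s1 h1 s2 h2 hne
    obtain ⟨q1, rfl⟩ := hS s1 h1
    obtain ⟨q2, rfl⟩ := hS s2 h2
    rw [Function.onFun, Finset.disjoint_left]
    intro x hx1 hx2
    exact hne (by rw [← anonClass_eq_of_mem L hx1, ← anonClass_eq_of_mem L hx2])

lemma nbhd_eq_classes (p : P) :
    nbhd L p = ((nbhd L p).image (anonClass L)).biUnion id := by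
  ext x
  simp only [mem_biUnion, mem_image, id]
  constructor
  · intro hx; exact ⟨anonClass L x, ⟨x, hx, rfl⟩, self_mem_anonClass L x⟩
  · rintro ⟨s, ⟨q, hq, rfl⟩, hx⟩
    exact class_subset_nbhd L hq hx

lemma nbhd_classes_card {v b r k n : ℕ} (hC : IsConfiguration L v b r k)
    (hclass : ∀ p : P, (anonClass L p).card = n) (p : P) :
    r * (k - 1) = n * ((nbhd L p).image (anonClass L)).card := by
  rw [← nbhd_card L hC p, nbhd_eq_classes L p,
    classes_biUnion_card L hclass _ (fun s hs => ?_),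
    ← nbhd_eq_classes L p]
  rw [mem_image] at hs
  obtain ⟨q, -, rfl⟩ := hs
  exact ⟨q, rfl⟩

lemma self_class_not_mem (p : P) :
    anonClass L p ∉ (nbhd L p).image (anonClass L) := by
  rw [mem_image]
  rintro ⟨q, hq, heq⟩
  have hmem : q ∈ anonClass L p := heq ▸ self_mem_anonClass L q
  rw [mem_anonClass] at hmem
  rw [← hmem] at hq
  exact not_mem_nbhd_self L q hq

lemma card_univ_classes {n : ℕ} (hclass : ∀ p : P, (anonClass L p).card = n) :
    Fintype.card P = n * (Finset.univ.image fun p : P => anonClass L p).card := by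
  have huniv : (Finset.univ : Finset P) =
      (Finset.univ.image fun p : P => anonClass L p).biUnion id := by
    ext x
    simp only [mem_biUnion, mem_image, id, mem_univ, true_iff]
    exact ⟨anonClass L x, ⟨x, by simp, rfl⟩, self_mem_anonClass L x⟩
  rw [← Finset.card_univ]
  conv_lhs => rw [huniv]
  rw [classes_biUnion_card L hclass]
  rintro s hs
  rw [mem_image] at hs
  obtain ⟨q, -, rfl⟩ := hs
  exact ⟨q, rfl⟩

lemma exists_nbhd_mem {v b r k : ℕ} (hC : IsConfiguration L v b r k) (p : P) :
    ∃ q, q ∈ nbhd L p := by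
  obtain ⟨-, -, hk, hr1, hline, hdeg, -⟩ := hC
  have hne : (L.filter fun l => p ∈ l).Nonempty :=
    card_pos.mp (by rw [hdeg]; omega)
  obtain ⟨l, hl⟩ := hne
  rw [mem_filter] at hl
  have hcard : 1 < l.card := by rw [hline l hl.1]; omega
  obtain ⟨q, hq, hqp⟩ := Finset.exists_mem_ne hcard p
  exact ⟨q, (mem_nbhd L).mpr ⟨hqp, l, hl.1, hl.2, hq⟩⟩

lemma n_le_r {v b r k n : ℕ} (hC : IsConfiguration L v b r k)
    (hclass : ∀ p : P, (anonClass L p).card = n) [Nonempty P] : n ≤ r := by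
  classical
  obtain ⟨p⟩ := ‹Nonempty P›
  obtain ⟨q, hqn⟩ := exists_nbhd_mem L hC p
  have hdeg := hC.2.2.2.2.2.1
  have hmap : ∀ x : P, ∃ l' : Finset P,
      x ∈ anonClass L q → (l' ∈ L ∧ p ∈ l' ∧ x ∈ l') := by
    intro x
    by_cases hx : x ∈ anonClass L q
    · obtain ⟨-, l', hl', hp, hxl⟩ := (mem_nbhd L).mp (class_subset_nbhd L hqn hx)
      exact ⟨l', fun _ => ⟨hl', hp, hxl⟩⟩
    · exact ⟨∅, fun h => absurd h hx⟩
  choose f hf using hmap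
  have hle : (anonClass L q).card ≤ (L.filter fun l => p ∈ l).card :=
    Finset.card_le_card_of_injOn f
      (fun x hx => by
        rw [mem_coe, mem_filter]
        exact ⟨(hf x hx).1, (hf x hx).2.1⟩)
      (fun x hx y hy hxy => by
        have hx' : x ∈ anonClass L y := by
          rw [anonClass_eq_of_mem L hy]; exact hx
        exact eq_of_class_of_line L hx' (hf y hy).1 (hxy ▸ (hf x hx).2.2) (hf y hy).2.2)
  rw [hclass q, hdeg p] at hle
  exact hle

lemma classes_step [Fintype P] [DecidableEq P] (L : Finset (Finset P))
    {v b r k n : ℕ} (hC : IsConfiguration L v b r k)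
    (hclass : ∀ p : P, (anonClass L p).card = n) (hrn : r = n)
    {p q : P} (hq : q ∈ nbhd L p) :
    (nbhd L q).image (anonClass L) ⊆
      insert (anonClass L p) ((nbhd L p).image (anonClass L)) := by
  have hn1 : 1 ≤ n := by
    rw [← hclass p]; exact card_pos.mpr ⟨p, self_mem_anonClass L p⟩
  have hk : 2 ≤ k := hC.2.2.1
  have hcq : ((nbhd L q).image (anonClass L)).card = k - 1 := by
    have h := nbhd_classes_card L hC hclass q
    rw [hrn] at h
    exact (Nat.eq_of_mul_eq_mul_left hn1 h.symm)
  obtain ⟨hqp, l, hl, hpl, hql⟩ := (mem_nbhd L).mp hq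
  have hinj : Set.InjOn (anonClass L) l := by
    intro x hx y hy hxy
    exact eq_of_class_of_line L (hxy ▸ self_mem_anonClass L x) hl hx hy
  have hlcard := hC.2.2.2.2.1 l hl
  have hA : ((l.erase q).image (anonClass L)).card = k - 1 := by
    rw [card_image_of_injOn (hinj.mono (Finset.coe_subset.mpr (erase_subset q l))),
      card_erase_of_mem hql, hlcard]
  have hsub : (l.erase q).image (anonClass L) ⊆ (nbhd L q).image (anonClass L) := by
    apply image_subset_image
    intro x hx
    rw [mem_erase] at hx
    exact (mem_nbhd L).mpr ⟨hx.1, l, hl, hql, hx.2⟩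
  have heq : (l.erase q).image (anonClass L) = (nbhd L q).image (anonClass L) :=
    eq_of_subset_of_card_le hsub (by rw [hA, hcq])
  rw [← heq]
  intro s hs
  rw [mem_image] at hs
  obtain ⟨x, hx, rfl⟩ := hs
  rw [mem_erase] at hx
  by_cases hxp : x = p
  · subst hxp; exact mem_insert_self _ _
  · exact mem_insert_of_mem
      (mem_image_of_mem _ ((mem_nbhd L).mpr ⟨hxp, l, hl, hpl, hx.2⟩))
end AuxAnon

/-- In a connected combinatorial `(v,b,r,k)`-configuration with `n`-anonymous
neighborhoods whose anonymity classes all have cardinality exactly `n`, we have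
`r = n` if and only if the number of anonymity classes equals `k`. -/
theorem anonymous_neighborhoods_r_eq_n_iff {P : Type*} [Fintype P]
    [DecidableEq P] [Nonempty P] (L : Finset (Finset P)) (v b r k n : ℕ)
    (hconn : ConfigConnected L) (hC : IsConfiguration L v b r k)
    (hclass : ∀ p : P, (anonClass L p).card = n) :
    r = n ↔ (Finset.univ.image fun p : P => anonClass L p).card = k := by
  classical
  have hn1 : 1 ≤ n := by
    obtain ⟨p⟩ := ‹Nonempty P›
    rw [← hclass p]; exact card_pos.mpr ⟨p, self_mem_anonClass L p⟩
  have hk : 2 ≤ k := hC.2.2.1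
  constructor
  · intro hrn
    obtain ⟨p⟩ := ‹Nonempty P›
    set S := anonClass L p ∪ nbhd L p with hS
    have hclosed : ∀ x ∈ S, ∀ y : P, (∃ l ∈ L, x ∈ l ∧ y ∈ l) → y ∈ S := by
      intro x hx y hy
      by_cases hxy : y = x
      · subst hxy; exact hx
      have hyn : y ∈ nbhd L x := (mem_nbhd L).mpr ⟨hxy, hy⟩
      rw [hS, mem_union] at hx
      rcases hx with hx | hx
      · rw [mem_anonClass] at hx
        rw [hx] at hyn
        exact mem_union_right _ hyn
      · have hmem := classes_step L hC hclass hrn hx (mem_image_of_mem _ hyn)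
        rw [mem_insert] at hmem
        rcases hmem with h | h
        · exact mem_union_left _ (by rw [← h]; exact self_mem_anonClass L y)
        · rw [mem_image] at h
          obtain ⟨z, hz, hzy⟩ := h
          have hyz : y ∈ anonClass L z := by rw [hzy]; exact self_mem_anonClass L y
          exact mem_union_right _ (class_subset_nbhd L hz hyz)
    have huniv : ∀ t : P, t ∈ S := by
      intro t
      induction hconn p t with
      | refl => exact mem_union_left _ (self_mem_anonClass L p)
      | tail _ h2 ih => exact hclosed _ ih _ h2
    have hSuniv : S = Finset.univ := eq_univ_iff_forall.mpr huniv
    have hdisj : Disjoint (anonClass L p) (nbhd L p) := by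
      rw [disjoint_left]
      intro x hx1 hx2
      rw [mem_anonClass] at hx1
      rw [← hx1] at hx2
      exact not_mem_nbhd_self L x hx2
    have hcardS : S.card = n + r * (k - 1) := by
      rw [hS, card_union_of_disjoint hdisj, hclass p, nbhd_card L hC p]
    obtain ⟨k', rfl⟩ : ∃ k', k = k' + 1 := ⟨k - 1, by omega⟩
    have h1 : Fintype.card P = n + n * k' := by
      rw [← Finset.card_univ, ← hSuniv, hcardS, hrn]
      simp
    have hv : n + n * k' = n * (Finset.univ.image fun p : P => anonClass L p).card := by
      rw [← h1]; exact card_univ_classes L hclass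
    have h2 : n * (k' + 1) =
        n * (Finset.univ.image fun p : P => anonClass L p).card := by
      rw [Nat.mul_add, mul_one, Nat.add_comm, ← hv]
    exact (Nat.eq_of_mul_eq_mul_left hn1 h2).symm
  · intro hmk
    obtain ⟨p⟩ := ‹Nonempty P›
    have hc := nbhd_classes_card L hC hclass p
    have hsub : insert (anonClass L p) ((nbhd L p).image (anonClass L)) ⊆
        Finset.univ.image fun p : P => anonClass L p := by
      intro s hs
      rw [mem_insert] at hs
      rcases hs with rfl | hs
      · exact mem_image_of_mem _ (mem_univ p)
      · rw [mem_image] at hs; obtain ⟨q, -, rfl⟩ := hs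
        exact mem_image_of_mem _ (mem_univ q)
    have hcard := card_le_card hsub
    rw [card_insert_of_notMem (self_class_not_mem L p), hmk] at hcard
    have hrle : r ≤ n := by
      have h1 : r * (k - 1) ≤ n * (k - 1) := by
        rw [hc]; exact Nat.mul_le_mul_left n (by omega)
      exact Nat.le_of_mul_le_mul_right h1 (by omega)
    exact le_antisymm hrle (n_le_r L hC hclass)
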